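/- Let L be a language over a finite alphabet Σ recognized by a deterministic automaton whose set of final states is finite (its set of states may be infinite). If the set L_∞ of infinite words having infinitely many prefixes in L is uncountable, then L is exponential. -/

import Mathlib

/-- The prefix of length `ℓ` of an infinite word `w : ℕ → A`. -/
def prefixOf {A : Type*} (w : ℕ → A) (ℓ : ℕ) : List A := List.ofFn (fun i : Fin ℓ => w i)

/-- `Linf L` : infinite words having infinitely many finite prefixes in `L`. -/
def Linf {A : Type*} (L : Set (List A)) : Set (ℕ → A) :=
  {w | {n : ℕ | prefixOf w n ∈ L}.Infinite}

/-- Transition function of a deterministic automaton extended to words. -/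
def deltaStar {Q A : Type*} (δ : Q → A → Q) (q : Q) (w : List A) : Q := w.foldl δ q

/-- A language `M` is exponential if the number of its words of length `n`
is at least `c·θⁿ` for some `θ > 1`, `c > 0` and infinitely many `n`. -/
def Exponential {A : Type*} (M : Set (List A)) : Prop :=
  ∃ θ : ℝ, 1 < θ ∧ ∃ c : ℝ, 0 < c ∧
    ∀ N : ℕ, ∃ n : ℕ, N ≤ n ∧ c * θ ^ n ≤ ({w ∈ M | w.length = n}.ncard : ℝ)

lemma prefixOf_length' {A : Type*} (w : ℕ → A) (n : ℕ) : (prefixOf w n).length = n := by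
  simp [prefixOf]

lemma prefixOf_take' {A : Type*} (w : ℕ → A) {n m : ℕ} (h : n ≤ m) :
    (prefixOf w m).take n = prefixOf w n := by
  apply List.ext_getElem
  · simp [prefixOf, h]
  · intro i h1 h2
    simp [prefixOf]

lemma deltaStar_append' {Q A : Type*} (δ : Q → A → Q) (q : Q) (a b : List A) :
    deltaStar δ q (a ++ b) = deltaStar δ (deltaStar δ q a) b := by
  simp [deltaStar, List.foldl_append]

/-- Concatenation of blocks `X`/`Y` according to a list of booleans. -/
def concatXY {A : Type*} (X Y : List A) : List Bool → List A
  | [] => []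
  | b :: l => (if b then X else Y) ++ concatXY X Y l

lemma concatXY_length {A : Type*} {X Y : List A} (h : X.length = Y.length) :
    ∀ l : List Bool, (concatXY X Y l).length = X.length * l.length := by
  intro l
  induction l with
  | nil => simp [concatXY]
  | cons b t ih =>
    have hb : (if b then X else Y).length = X.length := by cases b <;> simp [h]
    simp [concatXY, ih, hb, Nat.mul_succ, Nat.add_comm]

lemma concatXY_delta {Q A : Type*} (δ : Q → A → Q) (f : Q) {X Y : List A}
    (hX : deltaStar δ f X = f) (hY : deltaStar δ f Y = f) :
    ∀ l : List Bool, deltaStar δ f (concatXY X Y l) = f := by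
  intro l
  induction l with
  | nil => simp [concatXY, deltaStar]
  | cons b t ih =>
    have hb : deltaStar δ f (if b then X else Y) = f := by cases b <;> simp [hX, hY]
    simp [concatXY, deltaStar_append', hb, ih]

lemma concatXY_inj {A : Type*} {X Y : List A} (h : X.length = Y.length) (hne : X ≠ Y) :
    ∀ l₁ l₂ : List Bool, l₁.length = l₂.length →
      concatXY X Y l₁ = concatXY X Y l₂ → l₁ = l₂ := by
  intro l₁
  induction l₁ with
  | nil =>
    intro l₂ hlen _
    exact (List.length_eq_zero_iff.mp hlen.symm).symm
  | cons b t ih =>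
    intro l₂ hlen heq
    cases l₂ with
    | nil => simp at hlen
    | cons b' t' =>
      have hblen : (if b then X else Y).length = (if b' then X else Y).length := by
        cases b <;> cases b' <;> simp [h]
      have := List.append_inj heq hblen
      have hb : b = b' := by
        cases b <;> cases b' <;> simp_all
      have ht : t = t' := ih t' (by simpa using hlen) this.2
      rw [hb, ht]

lemma infinite_exists_ge {s : Set ℕ} (hs : s.Infinite) (N : ℕ) : ∃ n ∈ s, N ≤ n := by
  obtain ⟨n, hn, hlt⟩ := hs.exists_gt N
  exact ⟨n, hn, hlt.le⟩

theorem stmt_9 {Γ : Type*} [Fintype Γ] (L : Set (List Γ))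
    {Q : Type*} (q0 : Q) (δ : Q → Γ → Q) (F : Set Q) (hF : F.Finite)
    (hL : L = {w | deltaStar δ q0 w ∈ F})
    (huncount : ¬ (Linf L).Countable) :
    Exponential L := by
  subst hL
  -- Step A : find a final state `f` visited infinitely often by uncountably many words
  set Sf : Q → Set (ℕ → Γ) :=
    fun f => {w | {n : ℕ | deltaStar δ q0 (prefixOf w n) = f}.Infinite} with hSf_def
  have hsubA : Linf {w | deltaStar δ q0 w ∈ F} ⊆ ⋃ f ∈ F, Sf f := by
    intro w hw
    by_contra hc
    simp only [Set.mem_iUnion, hSf_def, Set.mem_setOf_eq, not_exists] at hc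
    have hfin : {n : ℕ | deltaStar δ q0 (prefixOf w n) ∈ F}.Finite := by
      have : {n : ℕ | deltaStar δ q0 (prefixOf w n) ∈ F} ⊆
          ⋃ f ∈ F, {n : ℕ | deltaStar δ q0 (prefixOf w n) = f} := by
        intro n hn; exact Set.mem_biUnion hn rfl
      exact Set.Finite.subset (Set.Finite.biUnion hF (fun f hf => by
        have := hc f; rw [Set.not_infinite] at this
        exact this hf)) this
    have hw' : {n : ℕ | deltaStar δ q0 (prefixOf w n) ∈ F}.Infinite := by
      simpa [Linf, Set.mem_setOf_eq] using hw
    exact hw' hfin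
  obtain ⟨f, hfF, hSfu⟩ : ∃ f ∈ F, ¬ (Sf f).Countable := by
    by_contra h; push_neg at h
    exact huncount (Set.Countable.mono hsubA (Set.Countable.biUnion hF.countable h))
  -- Step B : find a fixed prefix `u` reaching `f`
  set T : List Γ → Set (ℕ → Γ) :=
    fun u => {w | w ∈ Sf f ∧ prefixOf w u.length = u} with hT_def
  obtain ⟨u, huf, hTu⟩ : ∃ u, deltaStar δ q0 u = f ∧ ¬ (T u).Countable := by
    by_contra h; push_neg at h
    apply hSfu
    have hsubB : Sf f ⊆ ⋃ u ∈ {u : List Γ | deltaStar δ q0 u = f}, T u := by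
      intro w hw
      obtain ⟨n, hn⟩ := Set.Infinite.nonempty hw
      refine Set.mem_biUnion (show prefixOf w n ∈ _ from hn) ?_
      exact ⟨hw, by rw [prefixOf_length']⟩
    exact Set.Countable.mono hsubB
      (Set.Countable.biUnion (Set.to_countable _) (fun v hv => h v hv))
  -- the set of loops at `f`
  set M : Set (List Γ) := {v | v ≠ [] ∧ deltaStar δ f v = f} with hM_def
  have key : ∀ w ∈ T u, ∀ n, deltaStar δ q0 (prefixOf w n) = f → u.length < n →
      (prefixOf w n).drop u.length ∈ M ∧ prefixOf w n = u ++ (prefixOf w n).drop u.length := by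
    intro w hw n hn hlt
    have hsplit : prefixOf w n = u ++ (prefixOf w n).drop u.length := by
      conv_lhs => rw [← List.take_append_drop u.length (prefixOf w n)]
      rw [prefixOf_take' w hlt.le, hw.2]
    constructor
    · constructor
      · have : ((prefixOf w n).drop u.length).length = n - u.length := by
          simp [prefixOf_length']
        intro hnil
        rw [hnil] at this
        simp at this
        omega
      · have := hn
        rw [hsplit, deltaStar_append', huf] at this
        exact this
    · exact hsplit
  by_cases hcomm : ∀ x ∈ M, ∀ y ∈ M, x ++ y = y ++ x
  · -- all loops commute : T u is a subsingleton, contradiction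
    exfalso
    apply hTu
    apply Set.Subsingleton.countable
    intro w hw w' hw'
    funext i
    obtain ⟨n', hn'mem, hn'gt⟩ := (hw'.1).exists_gt (max i u.length)
    have hi : i < n' := lt_of_le_of_lt (le_max_left _ _) hn'gt
    have hu' : u.length < n' := lt_of_le_of_lt (le_max_right _ _) hn'gt
    obtain ⟨n, hnmem, hngt⟩ := (hw.1).exists_gt n'
    have hun : u.length < n := hu'.trans hngt
    obtain ⟨hyM, hysplit⟩ := key w' hw' n' hn'mem hu'
    obtain ⟨hxM, hxsplit⟩ := key w hw n hnmem hun
    set y := (prefixOf w' n').drop u.length with hy_def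
    set x := (prefixOf w n).drop u.length with hx_def
    have hylen : y.length = n' - u.length := by simp [hy_def, prefixOf_length']
    have hxlen : x.length = n - u.length := by simp [hx_def, prefixOf_length']
    have hyx : y.length ≤ x.length := by omega
    have htake : x.take y.length = y := by
      have hcy := hcomm x hxM y hyM
      have h1 : (x ++ y).take y.length = x.take y.length := by
        rw [List.take_append_of_le_length hyx]
      have h2 : (y ++ x).take y.length = y := List.take_left
      rw [← h1, hcy, h2]
    have hmain : prefixOf w n' = prefixOf w' n' := by
      have : prefixOf w n' = (prefixOf w n).take n' := (prefixOf_take' w hngt.le).symm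
      rw [this, hxsplit, List.take_append,
        List.take_of_length_le (by omega : u.length ≤ n')]
      have : n' - u.length = y.length := by omega
      rw [this, htake, hysplit]
    have := List.ofFn_injective hmain
    exact congrFun this ⟨i, hi⟩
  · -- two non-commuting loops : exponential growth
    push_neg at hcomm
    obtain ⟨x, hxM, y, hyM, hne⟩ := hcomm
    set X := x ++ y with hX_def
    set Y := y ++ x with hY_def
    have hXY : X.length = Y.length := by simp [hX_def, hY_def, Nat.add_comm]
    have hXYne : X ≠ Y := hne
    have hXf : deltaStar δ f X = f := by
      rw [hX_def, deltaStar_append', hxM.2, hyM.2]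
    have hYf : deltaStar δ f Y = f := by
      rw [hY_def, deltaStar_append', hyM.2, hxM.2]
    set m := X.length with hm_def
    have hmpos : 0 < m := by
      rw [hm_def, hX_def]
      simp only [List.length_append]
      have := hxM.1
      cases x
      · exact absurd rfl this
      · simp
    -- counting lemma
    have hcount : ∀ k : ℕ, (2 : ℕ) ^ k ≤
        ({w ∈ {w : List Γ | deltaStar δ q0 w ∈ F} | w.length = u.length + m * k}.ncard) := by
      intro k
      set n := u.length + m * k with hn_def
      set A : Set (List Γ) :=
        (fun b : Fin k → Bool => u ++ concatXY X Y (List.ofFn b)) '' Set.univ with hA_def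
      have hAsub : A ⊆ {w ∈ {w : List Γ | deltaStar δ q0 w ∈ F} | w.length = n} := by
        rintro _ ⟨b, -, rfl⟩
        constructor
        · show deltaStar δ q0 (u ++ concatXY X Y (List.ofFn b)) ∈ F
          rw [deltaStar_append', huf, concatXY_delta δ f hXf hYf]
          exact hfF
        · simp [concatXY_length hXY, hn_def, hm_def]
      have hfin : ({w ∈ {w : List Γ | deltaStar δ q0 w ∈ F} | w.length = n}).Finite :=
        (List.finite_length_eq Γ n).subset (fun w hw => hw.2)
      have hinj : Set.InjOn (fun b : Fin k → Bool => u ++ concatXY X Y (List.ofFn b))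
          Set.univ := by
        intro b _ b' _ heq
        have h1 : concatXY X Y (List.ofFn b) = concatXY X Y (List.ofFn b') :=
          List.append_cancel_left heq
        have h2 : List.ofFn b = List.ofFn b' :=
          concatXY_inj hXY hXYne _ _ (by simp) h1
        exact List.ofFn_injective h2
      have hcard : A.ncard = 2 ^ k := by
        rw [hA_def, Set.ncard_image_of_injOn hinj, Set.ncard_univ,
          Nat.card_eq_fintype_card]
        simp
      calc (2:ℕ) ^ k = A.ncard := hcard.symm
        _ ≤ _ := Set.ncard_le_ncard hAsub hfin
    -- assemble the exponential bound
    refine ⟨(2 : ℝ) ^ ((m : ℝ)⁻¹), ?_, (2 : ℝ) ^ (-((u.length : ℝ) * (m : ℝ)⁻¹)), ?_, ?_⟩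
    · rw [show (1:ℝ) = (2:ℝ) ^ (0:ℝ) by simp]
      exact Real.rpow_lt_rpow_left_iff (by norm_num) |>.mpr
        (by positivity)
    · exact Real.rpow_pos_of_pos (by norm_num) _
    · intro N
      refine ⟨u.length + m * N, by nlinarith, ?_⟩
      have hmR : (0:ℝ) < (m : ℝ) := by exact_mod_cast hmpos
      have hθn : ((2 : ℝ) ^ ((m : ℝ)⁻¹)) ^ (u.length + m * N) =
          (2 : ℝ) ^ ((m : ℝ)⁻¹ * (u.length + m * N : ℕ)) := by
        rw [← Real.rpow_natCast ((2:ℝ) ^ ((m:ℝ)⁻¹)) (u.length + m * N),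
          ← Real.rpow_mul (by norm_num)]
      rw [hθn, ← Real.rpow_add (by norm_num)]
      have hexp : -((u.length : ℝ) * (m : ℝ)⁻¹) + (m : ℝ)⁻¹ * (u.length + m * N : ℕ) =
          (N : ℕ) := by
        push_cast
        field_simp
        ring
      rw [hexp, Real.rpow_natCast]
      have := hcount N
      calc (2:ℝ) ^ N = ((2^N : ℕ) : ℝ) := by push_cast; ring
        _ ≤ _ := by exact_mod_cast this
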